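/- Let C ⊆ E be a convex set of diameter at most D > 0 and let F : E → E satisfy ‖F(x) - F(y)‖ ≤ (α/D)·max(‖F(x)‖, ‖F(y)‖)·‖x - y‖ for all x, y ∈ C, for some α ∈ [0,1). Let C' ⊆ E be a convex set of diameter at most D' > 0, and let R : E → E be nonexpansive on C' with R(C') ⊆ C and such that x + F(R(x)) ∈ C' for all x ∈ C'. Then the operator T̃ defined by T̃(x) = x + F(R(x)) satisfies, for all x, y ∈ C', ‖T̃(x) - T̃(y)‖ ≤ (1 + α'·max(‖T̃(x) - x‖, ‖T̃(y) - y‖)/D')·‖x - y‖ with α' = α·D'/D; that is, T̃ is α'-gradually expansive on C'. -/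

import Mathlib

/-- Composition preserves gradual expansiveness: if `F` satisfies the
displacement bound `‖F x - F y‖ ≤ (α/D) max(‖F x‖, ‖F y‖) ‖x - y‖` on `C`,
and `R` is nonexpansive on `C'` with `R(C') ⊆ C` and `x + F(R x) ∈ C'` for all
`x ∈ C'`, then `T̃ = Id + F ∘ R` is α'-gradually expansive on `C'` with
`α' = α D'/D`. -/
theorem gradually_expansive_composition
    {E : Type*} [NormedAddCommGroup E] [NormedSpace ℝ E]
    (C : Set E) (hC : Convex ℝ C)
    (D : ℝ) (hD0 : 0 < D) (hdiam : ∀ x ∈ C, ∀ y ∈ C, ‖x - y‖ ≤ D)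
    (F : E → E) (α : ℝ) (hα0 : 0 ≤ α) (hα1 : α < 1)
    (hFbound : ∀ x ∈ C, ∀ y ∈ C,
      ‖F x - F y‖ ≤ (α / D) * max ‖F x‖ ‖F y‖ * ‖x - y‖)
    (C' : Set E) (hC' : Convex ℝ C')
    (D' : ℝ) (hD'0 : 0 < D') (hdiam' : ∀ x ∈ C', ∀ y ∈ C', ‖x - y‖ ≤ D')
    (R : E → E) (hR : ∀ x ∈ C', ∀ y ∈ C', ‖R x - R y‖ ≤ ‖x - y‖)
    (hRC : ∀ x ∈ C', R x ∈ C)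
    (Tt : E → E) (hTt : ∀ x : E, Tt x = x + F (R x))
    (hTtC : ∀ x ∈ C', Tt x ∈ C') :
    ∀ x ∈ C', ∀ y ∈ C',
      ‖Tt x - Tt y‖ ≤
        (1 + (α * D' / D) * max ‖Tt x - x‖ ‖Tt y - y‖ / D') * ‖x - y‖ := by
  intro x hx y hy
  have hTx : Tt x - x = F (R x) := by rw [hTt]; abel
  have hTy : Tt y - y = F (R y) := by rw [hTt]; abel
  have hmax : (0:ℝ) ≤ max ‖F (R x)‖ ‖F (R y)‖ :=
    le_trans (norm_nonneg _) (le_max_left _ _)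
  have h1 := hFbound (R x) (hRC x hx) (R y) (hRC y hy)
  have h2 := hR x hx y hy
  have key : ‖Tt x - Tt y‖ ≤ ‖x - y‖ + (α / D) * max ‖F (R x)‖ ‖F (R y)‖ * ‖x - y‖ := by
    have hsplit : Tt x - Tt y = (x - y) + (F (R x) - F (R y)) := by
      rw [hTt, hTt]; abel
    rw [hsplit]
    refine le_trans (norm_add_le _ _) (add_le_add_right (le_trans h1 ?_) _)
    exact mul_le_mul_of_nonneg_left h2 (mul_nonneg (div_nonneg hα0 hD0.le) hmax)
  rw [hTx, hTy]
  have : (1 + α * D' / D * max ‖F (R x)‖ ‖F (R y)‖ / D') * ‖x - y‖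
      = ‖x - y‖ + (α / D) * max ‖F (R x)‖ ‖F (R y)‖ * ‖x - y‖ := by
    field_simp
  rw [this]
  exact key
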